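/- arXiv:2006.06914 — 7 statements merged into one kernel-verified Lean document; each statement's English description precedes it below -/
import Mathlib

section
/- Let (δ_t)_{t=1}^{T} be a sequence of nonnegative reals with δ_{t_0+1} ≤ 2Lη_{t_0} for some index t_0, and suppose that for all t ≥ t_0+1, δ_t² ≤ 4L² Σ_{s=t_0}^{t-1} η_s² + 2 Σ_{s=t_0+1}^{t-1} η_s a_s δ_s, where L ≥ 0, η_s ≥ 0 and 0 ≤ a_s ≤ 2L. Then for all t ∈ [T], δ_t ≤ 2L √(Σ_{s=t_0}^{t-1} η_s²) + 2 Σ_{s=t_0+1}^{t-1} η_s a_s. -/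
/-- Inductive core of the basic stability lemma: solving the quadratic recurrence. -/
theorem stmt0 (T t0 : ℕ) (L : ℝ) (hL : 0 ≤ L)
    (δ η a : ℕ → ℝ)
    (hδ : ∀ t, 0 ≤ δ t) (hη : ∀ t, 0 ≤ η t)
    (ha : ∀ t, 0 ≤ a t ∧ a t ≤ 2 * L)
    (hzero : ∀ t ≤ t0, δ t = 0)
    (hstart : δ (t0 + 1) ≤ 2 * L * η t0)
    (hrec : ∀ t, t0 + 1 ≤ t → t ≤ T →
      δ t ^ 2 ≤ 4 * L ^ 2 * ∑ s ∈ Finset.Icc t0 (t - 1), η s ^ 2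
        + 2 * ∑ s ∈ Finset.Icc (t0 + 1) (t - 1), η s * a s * δ s) :
    ∀ t, 1 ≤ t → t ≤ T →
      δ t ≤ 2 * L * Real.sqrt (∑ s ∈ Finset.Icc t0 (t - 1), η s ^ 2)
        + 2 * ∑ s ∈ Finset.Icc (t0 + 1) (t - 1), η s * a s := by
  intro t
  induction t using Nat.strong_induction_on with
  | _ t IH =>
  intro ht1 htT
  set S : ℝ := ∑ s ∈ Finset.Icc t0 (t - 1), η s ^ 2 with hS
  set Y : ℝ := ∑ s ∈ Finset.Icc (t0 + 1) (t - 1), η s * a s with hY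
  have hSnn : 0 ≤ S := Finset.sum_nonneg fun s _ => sq_nonneg _
  have hxnn : 0 ≤ 2 * L * Real.sqrt S := by positivity
  have hYnn : 0 ≤ Y :=
    Finset.sum_nonneg fun s _ => mul_nonneg (hη s) (ha s).1
  rcases le_or_gt t t0 with hle | hgt
  · rw [hzero t hle]; linarith
  rcases eq_or_lt_of_le (Nat.succ_le_of_lt hgt) with heq | hlt
  · -- t = t0 + 1
    have ht : t - 1 = t0 := by omega
    have hSeq : S = η t0 ^ 2 := by
      rw [hS, ht, Finset.Icc_self, Finset.sum_singleton]
    have hsq : Real.sqrt S = η t0 := by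
      rw [hSeq, Real.sqrt_sq (hη t0)]
    have : δ t ≤ 2 * L * η t0 := heq ▸ hstart
    rw [hsq]; linarith
  · -- t ≥ t0 + 2
    
    have hrt' := hrec t (by omega) htT
    have key : ∀ s ∈ Finset.Icc (t0 + 1) (t - 1),
        η s * a s * δ s ≤ η s * a s * (2 * L * Real.sqrt S + 2 * Y) := by
      intro s hs
      rw [Finset.mem_Icc] at hs
      have hs1 : 1 ≤ s := by omega
      have hsT : s ≤ T := by omega
      have hIH := IH s (by omega) hs1 hsT
      have hsubS : ∑ u ∈ Finset.Icc t0 (s - 1), η u ^ 2 ≤ S := by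
        apply Finset.sum_le_sum_of_subset_of_nonneg
        · exact Finset.Icc_subset_Icc le_rfl (by omega)
        · intro u _ _; exact sq_nonneg _
      have hsubY : ∑ u ∈ Finset.Icc (t0 + 1) (s - 1), η u * a u ≤ Y := by
        apply Finset.sum_le_sum_of_subset_of_nonneg
        · exact Finset.Icc_subset_Icc le_rfl (by omega)
        · intro u _ _; exact mul_nonneg (hη u) (ha u).1
      have hsqrt : Real.sqrt (∑ u ∈ Finset.Icc t0 (s - 1), η u ^ 2)
          ≤ Real.sqrt S := Real.sqrt_le_sqrt hsubS
      have hδs : δ s ≤ 2 * L * Real.sqrt S + 2 * Y := by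
        calc δ s ≤ _ := hIH
          _ ≤ 2 * L * Real.sqrt S + 2 * Y := by
            have := mul_le_mul_of_nonneg_left hsqrt (by linarith : (0:ℝ) ≤ 2 * L)
            linarith
      exact mul_le_mul_of_nonneg_left hδs (mul_nonneg (hη s) (ha s).1)
    have hsum : ∑ s ∈ Finset.Icc (t0 + 1) (t - 1), η s * a s * δ s
        ≤ Y * (2 * L * Real.sqrt S + 2 * Y) := by
      calc ∑ s ∈ Finset.Icc (t0 + 1) (t - 1), η s * a s * δ s
          ≤ ∑ s ∈ Finset.Icc (t0 + 1) (t - 1),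
              η s * a s * (2 * L * Real.sqrt S + 2 * Y) :=
            Finset.sum_le_sum key
        _ = Y * (2 * L * Real.sqrt S + 2 * Y) := by
            rw [hY, ← Finset.sum_mul, mul_comm]
    have hSsq : Real.sqrt S ^ 2 = S := Real.sq_sqrt hSnn
    have hsq2 : δ t ^ 2 ≤ (2 * L * Real.sqrt S + 2 * Y) ^ 2 := by
      have h1 : δ t ^ 2 ≤ 4 * L ^ 2 * S + 2 * (Y * (2 * L * Real.sqrt S + 2 * Y)) := by
        calc δ t ^ 2 ≤ _ := hrt'
          _ ≤ 4 * L ^ 2 * S + 2 * (Y * (2 * L * Real.sqrt S + 2 * Y)) := by linarith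
      nlinarith [hSsq]
    nlinarith [hδ t, hxnn, hYnn, hsq2]
end

section
/- Let X ⊆ ℝ^d be a closed convex set and let (x^t), (y^t) be two projected gradient descent trajectories with x^1 = y^1, step sizes η_t ≥ 0, run on convex L-Lipschitz functions f_t and f_t' respectively, i.e. x^{t+1} = Proj_X(x^t − η_t g_t) and y^{t+1} = Proj_X(y^t − η_t g_t') with g_t ∈ ∂f_t(x^t), g_t' ∈ ∂f_t'(y^t). Suppose for every t there is a subgradient h_t ∈ ∂f_t'(x^t) with ‖g_t − h_t‖ ≤ a_t where 0 ≤ a_t ≤ 2L, and let t_0 = inf{t : f_t ≠ f_t'}. Then ‖x^T − y^T‖ ≤ 2L √(Σ_{t=t_0}^{T-1} η_t²) + 2 Σ_{t=t_0+1}^{T-1} η_t a_t. -/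
open RealInnerProductSpace

private lemma le_of_sq_le_sq' (a b : ℝ) (h : a ^ 2 ≤ b ^ 2) (hb : 0 ≤ b) : a ≤ b := by
  nlinarith [sq_nonneg (a - b), sq_nonneg (a + b)]

private lemma proj_var {d : ℕ} {X : Set (EuclideanSpace ℝ (Fin d))}
    (hXconvex : Convex ℝ X)
    {P : EuclideanSpace ℝ (Fin d) → EuclideanSpace ℝ (Fin d)}
    (hPmem : ∀ u, P u ∈ X)
    (hPproj : ∀ u, ∀ w ∈ X, ‖P u - u‖ ≤ ‖w - u‖) :
    ∀ u, ∀ w ∈ X, (inner ℝ (u - P u) (w - P u) : ℝ) ≤ 0 := by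
  intro u
  have hne : Nonempty X := ⟨⟨P u, hPmem u⟩⟩
  have key : ‖u - P u‖ = ⨅ w : X, ‖u - (w : EuclideanSpace ℝ (Fin d))‖ := by
    apply le_antisymm
    · refine le_ciInf fun w => ?_
      rw [norm_sub_rev u, norm_sub_rev u]
      exact hPproj u w w.2
    · have hbdd : BddBelow (Set.range fun w : X => ‖u - (w : EuclideanSpace ℝ (Fin d))‖) := by
        refine ⟨0, ?_⟩
        rintro r ⟨w, rfl⟩
        exact norm_nonneg _
      exact ciInf_le hbdd ⟨P u, hPmem u⟩
  exact (norm_eq_iInf_iff_real_inner_le_zero hXconvex (hPmem u)).1 key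

private lemma proj_nonexp {d : ℕ} {X : Set (EuclideanSpace ℝ (Fin d))}
    (hXconvex : Convex ℝ X)
    {P : EuclideanSpace ℝ (Fin d) → EuclideanSpace ℝ (Fin d)}
    (hPmem : ∀ u, P u ∈ X)
    (hPproj : ∀ u, ∀ w ∈ X, ‖P u - u‖ ≤ ‖w - u‖) :
    ∀ u v, ‖P u - P v‖ ≤ ‖u - v‖ := by
  intro u v
  have h1 := proj_var hXconvex hPmem hPproj u (P v) (hPmem v)
  have h2 := proj_var hXconvex hPmem hPproj v (P u) (hPmem u)
  have hkey : (inner ℝ (P u - P v) (P u - P v) : ℝ) ≤ (inner ℝ (u - v) (P u - P v) : ℝ) := by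
    simp only [inner_sub_left, inner_sub_right] at h1 h2 ⊢
    linarith [real_inner_comm u (P v), real_inner_comm u (P u), real_inner_comm v (P u),
      real_inner_comm v (P v), real_inner_comm (P u) (P v)]
  have hsq : (inner ℝ (P u - P v) (P u - P v) : ℝ) = ‖P u - P v‖ ^ 2 := real_inner_self_eq_norm_sq _
  have hle : (inner ℝ (u - v) (P u - P v) : ℝ) ≤ ‖u - v‖ * ‖P u - P v‖ := real_inner_le_norm _ _
  rcases eq_or_lt_of_le (norm_nonneg (P u - P v)) with h0 | h0
  · rw [← h0]; exact norm_nonneg _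
  · have : ‖P u - P v‖ ^ 2 ≤ ‖u - v‖ * ‖P u - P v‖ := by
      rw [← hsq]; exact le_trans hkey hle
    nlinarith


set_option maxHeartbeats 1000000 in

/-- The basic lemma: divergence of two projected (sub)gradient descent trajectories on
convex Lipschitz objectives. -/
theorem stmt2 {d : ℕ} (X : Set (EuclideanSpace ℝ (Fin d)))
    (hXclosed : IsClosed X) (hXconvex : Convex ℝ X)
    (P : EuclideanSpace ℝ (Fin d) → EuclideanSpace ℝ (Fin d))
    (hPmem : ∀ u, P u ∈ X)
    (hPproj : ∀ u, ∀ w ∈ X, ‖P u - u‖ ≤ ‖w - u‖)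
    (L : ℝ) (hL : 0 ≤ L)
    (T t0 : ℕ) (hT : 1 ≤ T)
    (f f' : ℕ → EuclideanSpace ℝ (Fin d) → ℝ)
    (hconv : ∀ t, ConvexOn ℝ X (f t)) (hconv' : ∀ t, ConvexOn ℝ X (f' t))
    (hLip : ∀ t, ∀ u ∈ X, ∀ v ∈ X, |f t u - f t v| ≤ L * ‖u - v‖)
    (hLip' : ∀ t, ∀ u ∈ X, ∀ v ∈ X, |f' t u - f' t v| ≤ L * ‖u - v‖)
    (η a : ℕ → ℝ) (hη : ∀ t, 0 ≤ η t) (ha : ∀ t, 0 ≤ a t ∧ a t ≤ 2 * L)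
    (x y g g' h : ℕ → EuclideanSpace ℝ (Fin d))
    (hx1 : x 1 = y 1) (hx1X : x 1 ∈ X)
    (hxstep : ∀ t, x (t + 1) = P (x t - η t • g t))
    (hystep : ∀ t, y (t + 1) = P (y t - η t • g' t))
    (hg : ∀ t, ∀ w ∈ X, f t (x t) + (inner ℝ (g t) (w - x t) : ℝ) ≤ f t w)
    (hg' : ∀ t, ∀ w ∈ X, f' t (y t) + (inner ℝ (g' t) (w - y t) : ℝ) ≤ f' t w)
    (hh : ∀ t, ∀ w ∈ X, f' t (x t) + (inner ℝ (h t) (w - x t) : ℝ) ≤ f' t w)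
    (hgL : ∀ t, ‖g t‖ ≤ L) (hg'L : ∀ t, ‖g' t‖ ≤ L)
    (hgh : ∀ t, ‖g t - h t‖ ≤ a t)
    (ht0f : ∀ t < t0, f t = f' t)
    (ht0g : ∀ t < t0, g t = g' t) :
    ‖x T - y T‖ ≤ 2 * L * Real.sqrt (∑ t ∈ Finset.Icc t0 (T - 1), η t ^ 2)
      + 2 * ∑ t ∈ Finset.Icc (t0 + 1) (T - 1), η t * a t := by
  have hnonexp : ∀ u v, ‖P u - P v‖ ≤ ‖u - v‖ := proj_nonexp hXconvex hPmem hPproj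
  have hxmem : ∀ t, 1 ≤ t → x t ∈ X := by
    intro t ht
    obtain ⟨n, rfl⟩ : ∃ n, t = n + 1 := ⟨t - 1, by omega⟩
    rw [hxstep n]; exact hPmem _
  have hymem : ∀ t, 1 ≤ t → y t ∈ X := by
    intro t ht
    obtain ⟨n, rfl⟩ : ∃ n, t = n + 1 := ⟨t - 1, by omega⟩
    rw [hystep n]; exact hPmem _
  set s := max t0 1 with hs
  have hs1 : 1 ≤ s := le_max_right _ _
  have hst0 : t0 ≤ s := le_max_left _ _
  -- trajectories agree up to time s
  have hzero : ∀ t, 1 ≤ t → t ≤ s → x t = y t := by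
    intro t
    induction t with
    | zero => omega
    | succ n ih =>
      intro _ h2
      rcases Nat.eq_zero_or_pos n with rfl | hn
      · exact hx1
      · have hmax := max_choice t0 1
        have ht0n : n < t0 := by omega
        have hxy : x n = y n := ih hn (by omega)
        rw [hxstep n, hystep n, hxy, ht0g n ht0n]
  -- the key one-step recurrence
  have hrec : ∀ t, 1 ≤ t → ‖x (t + 1) - y (t + 1)‖ ^ 2 ≤
      ‖x t - y t‖ ^ 2 + 2 * (η t * a t) * ‖x t - y t‖ + 4 * L ^ 2 * η t ^ 2 := by
    intro t ht
    have hne : ‖x (t + 1) - y (t + 1)‖ ≤ ‖(x t - y t) - η t • (g t - g' t)‖ := by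
      rw [hxstep, hystep]
      calc ‖P (x t - η t • g t) - P (y t - η t • g' t)‖
          ≤ ‖(x t - η t • g t) - (y t - η t • g' t)‖ := hnonexp _ _
        _ = ‖(x t - y t) - η t • (g t - g' t)‖ := by rw [smul_sub]; congr 1; abel
    have hmono : 0 ≤ (inner ℝ (h t - g' t) (x t - y t) : ℝ) := by
      have h1 := hh t (y t) (hymem t ht)
      have h2 := hg' t (x t) (hxmem t ht)
      have e1 : (inner ℝ (h t) (y t - x t) : ℝ) = -(inner ℝ (h t) (x t - y t) : ℝ) := by
        rw [← inner_neg_right]; congr 1; abel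
      rw [inner_sub_left]
      rw [e1] at h1
      linarith
    have hinner : -((inner ℝ (g t - g' t) (x t - y t) : ℝ)) ≤ a t * ‖x t - y t‖ := by
      have hsplit : (inner ℝ (g t - g' t) (x t - y t) : ℝ)
          = (inner ℝ (g t - h t) (x t - y t) : ℝ) + (inner ℝ (h t - g' t) (x t - y t) : ℝ) := by
        rw [← inner_add_left]; congr 1; abel
      have habs : |(inner ℝ (g t - h t) (x t - y t) : ℝ)| ≤ ‖g t - h t‖ * ‖x t - y t‖ :=
        abs_real_inner_le_norm _ _
      have hgh' : ‖g t - h t‖ * ‖x t - y t‖ ≤ a t * ‖x t - y t‖ :=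
        mul_le_mul_of_nonneg_right (hgh t) (norm_nonneg _)
      have := (abs_le.1 habs).1
      rw [hsplit]
      linarith
    have hgg' : ‖g t - g' t‖ ≤ 2 * L := by
      calc ‖g t - g' t‖ ≤ ‖g t‖ + ‖g' t‖ := norm_sub_le _ _
        _ ≤ 2 * L := by linarith [hgL t, hg'L t]
    have hexp : ‖(x t - y t) - η t • (g t - g' t)‖ ^ 2
        = ‖x t - y t‖ ^ 2 - 2 * (η t * (inner ℝ (g t - g' t) (x t - y t) : ℝ))
          + η t ^ 2 * ‖g t - g' t‖ ^ 2 := by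
      rw [norm_sub_sq_real, real_inner_smul_right, real_inner_comm, norm_smul,
        Real.norm_eq_abs, abs_of_nonneg (hη t), mul_pow]
    have hsq : ‖x (t + 1) - y (t + 1)‖ ^ 2 ≤ ‖(x t - y t) - η t • (g t - g' t)‖ ^ 2 :=
      pow_le_pow_left₀ (norm_nonneg _) hne 2
    rw [hexp] at hsq
    have hgg2 : ‖g t - g' t‖ ^ 2 ≤ (2 * L) ^ 2 :=
      pow_le_pow_left₀ (norm_nonneg _) hgg' 2
    have h3 : η t ^ 2 * ‖g t - g' t‖ ^ 2 ≤ η t ^ 2 * (2 * L) ^ 2 :=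
      mul_le_mul_of_nonneg_left hgg2 (sq_nonneg _)
    have h4 : η t * (-((inner ℝ (g t - g' t) (x t - y t) : ℝ))) ≤ η t * (a t * ‖x t - y t‖) :=
      mul_le_mul_of_nonneg_left hinner (hη t)
    nlinarith [hsq, h3, h4]
  -- main induction from s
  have main : ∀ T', s ≤ T' →
      ‖x T' - y T'‖ ≤ 2 * L * Real.sqrt (∑ t ∈ Finset.Icc s (T' - 1), η t ^ 2)
        + 2 * ∑ t ∈ Finset.Icc (s + 1) (T' - 1), η t * a t := by
    intro T' hT'
    induction T', hT' using Nat.le_induction with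
    | base =>
      have hx : x s = y s := hzero s hs1 le_rfl
      have h1 : Finset.Icc s (s - 1) = ∅ := Finset.Icc_eq_empty (by omega)
      have h2 : Finset.Icc (s + 1) (s - 1) = ∅ := Finset.Icc_eq_empty (by omega)
      rw [hx, sub_self, norm_zero, h1, h2]
      simp
    | succ n hn ih =>
      have hn1 : 1 ≤ n := le_trans hs1 hn
      have hA' : ∑ t ∈ Finset.Icc s (n + 1 - 1), η t ^ 2
          = (∑ t ∈ Finset.Icc s (n - 1), η t ^ 2) + η n ^ 2 := by
        rw [(by omega : n + 1 - 1 = (n - 1) + 1),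
          Finset.sum_Icc_succ_top (by omega : s ≤ (n - 1) + 1),
          (by omega : (n - 1) + 1 = n)]
      set A : ℝ := ∑ t ∈ Finset.Icc s (n - 1), η t ^ 2 with hAdef
      set C : ℝ := ∑ t ∈ Finset.Icc (s + 1) (n - 1), η t * a t with hCdef
      have hAnn : 0 ≤ A := Finset.sum_nonneg fun i _ => sq_nonneg _
      have hCnn : 0 ≤ C := Finset.sum_nonneg fun i _ =>
        mul_nonneg (hη i) (ha i).1
      have hBnn : (0:ℝ) ≤ Real.sqrt A := Real.sqrt_nonneg _
      have hB'nn : (0:ℝ) ≤ Real.sqrt (A + η n ^ 2) := Real.sqrt_nonneg _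
      have hBsq : Real.sqrt A ^ 2 = A := Real.sq_sqrt hAnn
      have hB'sq : Real.sqrt (A + η n ^ 2) ^ 2 = A + η n ^ 2 :=
        Real.sq_sqrt (by positivity)
      have hBB : Real.sqrt A ≤ Real.sqrt (A + η n ^ 2) :=
        Real.sqrt_le_sqrt (by nlinarith [sq_nonneg (η n)])
      have hδnn : (0:ℝ) ≤ ‖x n - y n‖ := norm_nonneg _
      have hrecn := hrec n hn1
      have hηa : 0 ≤ η n * a n := mul_nonneg (hη n) (ha n).1
      rw [hA']
      rcases eq_or_lt_of_le hn with heq | hlt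
      · -- n = s : everything collapses
        subst heq
        have hAz : A = 0 := by
          rw [hAdef, Finset.Icc_eq_empty (by omega), Finset.sum_empty]
        have hCz : C = 0 := by
          rw [hCdef, Finset.Icc_eq_empty (by omega), Finset.sum_empty]
        have hC'z : Finset.Icc (s + 1) (s + 1 - 1) = ∅ := Finset.Icc_eq_empty (by omega)
        rw [hC'z, Finset.sum_empty]
        have hx : x s = y s := hzero s hs1 le_rfl
        rw [hx, sub_self, norm_zero] at hrecn
        apply le_of_sq_le_sq' _ _ _ (by positivity)
        rw [hAz] at hB'sq ⊢
        nlinarith [hrecn, hB'sq, hB'nn]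
      · -- s < n
        have hC' : ∑ t ∈ Finset.Icc (s + 1) (n + 1 - 1), η t * a t
            = C + η n * a n := by
          rw [hCdef, (by omega : n + 1 - 1 = (n - 1) + 1),
            Finset.sum_Icc_succ_top (by omega : s + 1 ≤ (n - 1) + 1),
            (by omega : (n - 1) + 1 = n)]
        rw [hC']
        apply le_of_sq_le_sq' _ _ _ (by positivity)
        have hd2 : ‖x n - y n‖ ^ 2 ≤ (2 * L * Real.sqrt A + 2 * C) ^ 2 :=
          pow_le_pow_left₀ hδnn ih 2
        have hd1 : η n * a n * ‖x n - y n‖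
            ≤ η n * a n * (2 * L * Real.sqrt A + 2 * C) :=
          mul_le_mul_of_nonneg_left ih hηa
        nlinarith [hrecn, hd2, hd1, hBsq, hB'sq, hBB, hBnn, hB'nn, hCnn, hL, hηa,
          mul_nonneg (mul_nonneg hL hCnn) (sub_nonneg.2 hBB),
          mul_nonneg (mul_nonneg hL hηa) (sub_nonneg.2 hBB),
          mul_nonneg (mul_nonneg hL hηa) hB'nn,
          mul_nonneg hCnn hηa, sq_nonneg (η n * a n)]
  -- conclude
  by_cases hcase : T ≤ s
  · have hx : x T = y T := hzero T hT hcase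
    rw [hx, sub_self, norm_zero]
    have h1 : (0:ℝ) ≤ 2 * L * Real.sqrt (∑ t ∈ Finset.Icc t0 (T - 1), η t ^ 2) :=
      mul_nonneg (by linarith) (Real.sqrt_nonneg _)
    have h2 : (0:ℝ) ≤ ∑ t ∈ Finset.Icc (t0 + 1) (T - 1), η t * a t :=
      Finset.sum_nonneg fun i _ => mul_nonneg (hη i) (ha i).1
    linarith
  · push_neg at hcase
    have hmain := main T (le_of_lt hcase)
    have hsum1 : ∑ t ∈ Finset.Icc s (T - 1), η t ^ 2
        ≤ ∑ t ∈ Finset.Icc t0 (T - 1), η t ^ 2 :=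
      Finset.sum_le_sum_of_subset_of_nonneg
        (Finset.Icc_subset_Icc hst0 le_rfl) (fun i _ _ => sq_nonneg _)
    have hsum2 : ∑ t ∈ Finset.Icc (s + 1) (T - 1), η t * a t
        ≤ ∑ t ∈ Finset.Icc (t0 + 1) (T - 1), η t * a t :=
      Finset.sum_le_sum_of_subset_of_nonneg
        (Finset.Icc_subset_Icc (by omega) le_rfl)
        (fun i _ _ => mul_nonneg (hη i) (ha i).1)
    have hsqrt : Real.sqrt (∑ t ∈ Finset.Icc s (T - 1), η t ^ 2)
        ≤ Real.sqrt (∑ t ∈ Finset.Icc t0 (T - 1), η t ^ 2) :=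
      Real.sqrt_le_sqrt hsum1
    have : 2 * L * Real.sqrt (∑ t ∈ Finset.Icc s (T - 1), η t ^ 2)
        ≤ 2 * L * Real.sqrt (∑ t ∈ Finset.Icc t0 (T - 1), η t ^ 2) :=
      mul_le_mul_of_nonneg_left hsqrt (by linarith)
    linarith
end

section
/- Let x, y be points in a closed convex set X ⊆ ℝ^d, let f be a convex function on X with subgradients g ∈ ∂f(x), h ∈ ∂f(y), both of norm at most L, and let η ≥ 0. Then ‖Proj_X(x − ηg) − Proj_X(y − ηh)‖² ≤ ‖x − y‖² + 4L²η². -/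
open scoped InnerProductSpace

/-- Variational inequality for a projection map onto a convex set. -/
lemma proj_var_ineq {d : ℕ} {X : Set (EuclideanSpace ℝ (Fin d))}
    (hXconvex : Convex ℝ X)
    (P : EuclideanSpace ℝ (Fin d) → EuclideanSpace ℝ (Fin d))
    (hPmem : ∀ u, P u ∈ X)
    (hPproj : ∀ u, ∀ w ∈ X, ‖P u - u‖ ≤ ‖w - u‖)
    (u : EuclideanSpace ℝ (Fin d)) {w : EuclideanSpace ℝ (Fin d)} (hw : w ∈ X) :
    0 ≤ ⟪P u - u, w - P u⟫_ℝ := by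
  by_contra hc
  push_neg at hc
  set c : ℝ := ⟪P u - u, w - P u⟫_ℝ with hcdef
  have hnorm : 0 ≤ ‖w - P u‖ ^ 2 := by positivity
  set t : ℝ := min 1 (-c / (‖w - P u‖ ^ 2 + 1)) with htdef
  have ht0 : 0 < t := by
    apply lt_min one_pos
    apply div_pos (by linarith) (by positivity)
  have ht1 : t ≤ 1 := min_le_left _ _
  have hz : P u + t • (w - P u) ∈ X := by
    have := hXconvex (hPmem u) hw (by linarith : (0:ℝ) ≤ 1 - t) ht0.le (by ring)
    convert this using 1
    simp [smul_sub, sub_smul]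
    abel
  have hle := hPproj u _ hz
  have hsq : ‖P u - u‖ ^ 2 ≤ ‖P u + t • (w - P u) - u‖ ^ 2 := by
    have h1 : (0:ℝ) ≤ ‖P u - u‖ := norm_nonneg _
    nlinarith [norm_nonneg (P u + t • (w - P u) - u)]
  have hexp : ‖P u + t • (w - P u) - u‖ ^ 2
      = ‖P u - u‖ ^ 2 + 2 * t * c + t ^ 2 * ‖w - P u‖ ^ 2 := by
    have : P u + t • (w - P u) - u = (P u - u) + t • (w - P u) := by abel
    rw [this, norm_add_sq_real, real_inner_smul_right, norm_smul, Real.norm_eq_abs,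
      abs_of_pos ht0, ← hcdef]
    ring
  have key : 0 ≤ 2 * c + t * ‖w - P u‖ ^ 2 := by
    have h0 : 0 ≤ 2 * t * c + t ^ 2 * ‖w - P u‖ ^ 2 := by linarith [hsq, hexp.symm ▸ hsq]
    nlinarith
  have htsmall : t * ‖w - P u‖ ^ 2 ≤ -c := by
    have h2 : t ≤ -c / (‖w - P u‖ ^ 2 + 1) := min_le_right _ _
    have h3 : t * (‖w - P u‖ ^ 2 + 1) ≤ -c := by
      rw [← le_div_iff₀ (by positivity)]
      exact h2
    nlinarith
  linarith

lemma proj_nonexpansive {d : ℕ} {X : Set (EuclideanSpace ℝ (Fin d))}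
    (hXconvex : Convex ℝ X)
    (P : EuclideanSpace ℝ (Fin d) → EuclideanSpace ℝ (Fin d))
    (hPmem : ∀ u, P u ∈ X)
    (hPproj : ∀ u, ∀ w ∈ X, ‖P u - u‖ ≤ ‖w - u‖)
    (u v : EuclideanSpace ℝ (Fin d)) :
    ‖P u - P v‖ ≤ ‖u - v‖ := by
  have h1 := proj_var_ineq hXconvex P hPmem hPproj u (hPmem v)
  have h2 := proj_var_ineq hXconvex P hPmem hPproj v (hPmem u)
  have hkey : ‖P u - P v‖ ^ 2 ≤ ⟪u - v, P u - P v⟫_ℝ := by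
    have e1 : ⟪P u - u, P v - P u⟫_ℝ + ⟪P v - v, P u - P v⟫_ℝ
        = ⟪u - v, P u - P v⟫_ℝ - ‖P u - P v‖ ^ 2 := by
      rw [← real_inner_self_eq_norm_sq]
      simp only [inner_sub_left, inner_sub_right]
      ring
    linarith
  have h3 : ⟪u - v, P u - P v⟫_ℝ ≤ ‖u - v‖ * ‖P u - P v‖ := real_inner_le_norm _ _
  rcases eq_or_lt_of_le (norm_nonneg (P u - P v)) with h0 | h0
  · rw [← h0]; exact norm_nonneg _
  · have : ‖P u - P v‖ ^ 2 ≤ ‖u - v‖ * ‖P u - P v‖ := le_trans hkey h3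
    nlinarith

/-- One projected subgradient step on the same convex function from two points:
squared distance grows by at most `4L²η²`. -/
theorem stmt4 {d : ℕ} (X : Set (EuclideanSpace ℝ (Fin d)))
    (hXclosed : IsClosed X) (hXconvex : Convex ℝ X)
    (P : EuclideanSpace ℝ (Fin d) → EuclideanSpace ℝ (Fin d))
    (hPmem : ∀ u, P u ∈ X)
    (hPproj : ∀ u, ∀ w ∈ X, ‖P u - u‖ ≤ ‖w - u‖)
    (L η : ℝ) (hL : 0 ≤ L) (hη : 0 ≤ η)
    (f : EuclideanSpace ℝ (Fin d) → ℝ) (hconv : ConvexOn ℝ X f)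
    (x y : EuclideanSpace ℝ (Fin d)) (hx : x ∈ X) (hy : y ∈ X)
    (g h : EuclideanSpace ℝ (Fin d))
    (hg : ∀ w ∈ X, f x + (inner ℝ g (w - x) : ℝ) ≤ f w)
    (hh : ∀ w ∈ X, f y + (inner ℝ h (w - y) : ℝ) ≤ f w)
    (hgL : ‖g‖ ≤ L) (hhL : ‖h‖ ≤ L) :
    ‖P (x - η • g) - P (y - η • h)‖ ^ 2 ≤ ‖x - y‖ ^ 2 + 4 * L ^ 2 * η ^ 2 := by
  have hne := proj_nonexpansive hXconvex P hPmem hPproj (x - η • g) (y - η • h)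
  have hsq : ‖P (x - η • g) - P (y - η • h)‖ ^ 2 ≤ ‖(x - η • g) - (y - η • h)‖ ^ 2 :=
    pow_le_pow_left₀ (norm_nonneg _) hne 2
  -- monotonicity of subgradient
  have hmono : 0 ≤ ⟪g - h, x - y⟫_ℝ := by
    have h1 := hg y hy
    have h2 := hh x hx
    have e : ⟪g - h, x - y⟫_ℝ = -(⟪g, y - x⟫_ℝ + ⟪h, x - y⟫_ℝ) := by
      simp only [inner_sub_left, inner_sub_right]
      ring
    rw [e]
    linarith
  have hgh : ‖g - h‖ ≤ 2 * L := by
    calc ‖g - h‖ ≤ ‖g‖ + ‖h‖ := norm_sub_le _ _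
    _ ≤ 2 * L := by linarith
  have hexp : ‖(x - η • g) - (y - η • h)‖ ^ 2
      = ‖x - y‖ ^ 2 - 2 * η * ⟪g - h, x - y⟫_ℝ + η ^ 2 * ‖g - h‖ ^ 2 := by
    have e : (x - η • g) - (y - η • h) = (x - y) - η • (g - h) := by
      simp [smul_sub]; abel
    rw [e, norm_sub_sq_real, real_inner_smul_right, norm_smul, Real.norm_eq_abs,
      abs_of_nonneg hη, real_inner_comm (x - y) (g - h)]
    ring
  have hgh2 : ‖g - h‖ ^ 2 ≤ 4 * L ^ 2 := by nlinarith [norm_nonneg (g - h)]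
  nlinarith [sq_nonneg η, mul_nonneg hη hmono]
end

section
/- Full-batch projected subgradient descent on two datasets differing in one of n points, run for T iterations with step sizes (η_t) on convex L-Lipschitz losses over a convex set X ⊆ B(0,R), produces iterates x^T, y^T (from the same initialization) with ‖x^T − y^T‖ ≤ min{2R, 4L(√(Σ_{t=1}^{T-1} η_t²) + (1/n) Σ_{t=1}^{T-1} η_t)}. -/
section helpers
variable {E : Type*} [NormedAddCommGroup E] [InnerProductSpace ℝ E]

lemma my_proj_vi {X : Set E} (hX : Convex ℝ X)
    (P : E → E) (hPmem : ∀ u, P u ∈ X)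
    (hPproj : ∀ u, ∀ w ∈ X, ‖P u - u‖ ≤ ‖w - u‖) (u : E) :
    ∀ w ∈ X, (inner ℝ (u - P u) (w - P u) : ℝ) ≤ 0 := by
  haveI : Nonempty X := ⟨⟨P u, hPmem u⟩⟩
  have hbdd : BddBelow (Set.range fun w : X => ‖u - (w : E)‖) :=
    ⟨0, by rintro r ⟨w, rfl⟩; exact norm_nonneg _⟩
  have hnorm : ‖u - P u‖ = ⨅ w : X, ‖u - (w : E)‖ := by
    apply le_antisymm
    · exact le_ciInf fun w => by
        rw [norm_sub_rev u (P u), norm_sub_rev u (w : E)]; exact hPproj u w w.2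
    · exact ciInf_le hbdd ⟨P u, hPmem u⟩
  exact (norm_eq_iInf_iff_real_inner_le_zero hX (hPmem u)).mp hnorm

lemma my_proj_nonexp {X : Set E} (hX : Convex ℝ X)
    (P : E → E) (hPmem : ∀ u, P u ∈ X)
    (hPproj : ∀ u, ∀ w ∈ X, ‖P u - u‖ ≤ ‖w - u‖) (u v : E) :
    ‖P u - P v‖ ≤ ‖u - v‖ := by
  have h1 := my_proj_vi hX P hPmem hPproj u (P v) (hPmem v)
  have h2 := my_proj_vi hX P hPmem hPproj v (P u) (hPmem u)
  have e1 : (inner ℝ (u - v) (P u - P v) : ℝ)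
      = inner ℝ (u - P u) (P u - P v) + inner ℝ (P v - v) (P u - P v) + ‖P u - P v‖^2 := by
    rw [← real_inner_self_eq_norm_sq, ← inner_add_left, ← inner_add_left]
    congr 1
    abel
  have h1' : (0:ℝ) ≤ inner ℝ (u - P u) (P u - P v) := by
    have := h1
    rw [show P v - P u = -(P u - P v) by abel, inner_neg_right] at this
    linarith
  have h2' : (0:ℝ) ≤ inner ℝ (P v - v) (P u - P v) := by
    rw [show P v - v = -(v - P v) by abel, inner_neg_left]
    linarith
  have key : ‖P u - P v‖^2 ≤ ‖u - v‖ * ‖P u - P v‖ := by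
    have := real_inner_le_norm (u - v) (P u - P v)
    nlinarith
  rcases eq_or_lt_of_le (norm_nonneg (P u - P v)) with h0 | h0
  · rw [← h0]; exact norm_nonneg _
  · have : ‖P u - P v‖ * ‖P u - P v‖ ≤ ‖u - v‖ * ‖P u - P v‖ := by nlinarith
    exact le_of_mul_le_mul_right this h0

lemma my_sqrt_step (C q e : ℝ) (hC : 0 ≤ C) (hq : 0 ≤ q) (he : 0 ≤ e) (δ : ℝ)
    (hδ : 0 ≤ δ) (h : δ^2 ≤ (C + Real.sqrt q)^2 + e) :
    δ ≤ C + Real.sqrt (q + e) := by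
  have hqe : (0:ℝ) ≤ q + e := by linarith
  have s1 : Real.sqrt q ≤ Real.sqrt (q + e) := Real.sqrt_le_sqrt (by linarith)
  have s2 : Real.sqrt q ^ 2 = q := Real.sq_sqrt hq
  have s3 : Real.sqrt (q + e) ^ 2 = q + e := Real.sq_sqrt hqe
  have s4 : 0 ≤ Real.sqrt q := Real.sqrt_nonneg q
  have hS : 0 ≤ C + Real.sqrt (q + e) := by positivity
  calc δ = Real.sqrt (δ^2) := (Real.sqrt_sq hδ).symm
    _ ≤ Real.sqrt ((C + Real.sqrt (q + e))^2) := Real.sqrt_le_sqrt (by nlinarith)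
    _ = C + Real.sqrt (q + e) := Real.sqrt_sq hS
end helpers

set_option maxHeartbeats 1000000 in
/-- Uniform argument stability of full-batch projected subgradient descent on two datasets
differing in one of `n` points. -/
theorem stmt5 {d n : ℕ} (hn : 0 < n)
    (X : Set (EuclideanSpace ℝ (Fin d)))
    (hXclosed : IsClosed X) (hXconvex : Convex ℝ X)
    (R L : ℝ) (hL : 0 ≤ L)
    (hXR : X ⊆ Metric.closedBall 0 R)
    (P : EuclideanSpace ℝ (Fin d) → EuclideanSpace ℝ (Fin d))
    (hPmem : ∀ u, P u ∈ X)
    (hPproj : ∀ u, ∀ w ∈ X, ‖P u - u‖ ≤ ‖w - u‖)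
    (f f' : Fin n → EuclideanSpace ℝ (Fin d) → ℝ) (i : Fin n)
    (hdiff : ∀ j, j ≠ i → f j = f' j)
    (hconv : ∀ j, ConvexOn ℝ X (f j)) (hconv' : ∀ j, ConvexOn ℝ X (f' j))
    (hLip : ∀ j, ∀ u ∈ X, ∀ v ∈ X, |f j u - f j v| ≤ L * ‖u - v‖)
    (hLip' : ∀ j, ∀ u ∈ X, ∀ v ∈ X, |f' j u - f' j v| ≤ L * ‖u - v‖)
    (T : ℕ) (hT : 1 ≤ T)
    (η : ℕ → ℝ) (hη : ∀ t, 0 ≤ η t)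
    (x y : ℕ → EuclideanSpace ℝ (Fin d))
    (g g' : ℕ → Fin n → EuclideanSpace ℝ (Fin d))
    (hx1 : x 1 = y 1) (hx1X : x 1 ∈ X)
    (hg : ∀ t j, ∀ w ∈ X, f j (x t) + (inner ℝ (g t j) (w - x t) : ℝ) ≤ f j w)
    (hg' : ∀ t j, ∀ w ∈ X, f' j (y t) + (inner ℝ (g' t j) (w - y t) : ℝ) ≤ f' j w)
    (hgL : ∀ t j, ‖g t j‖ ≤ L) (hg'L : ∀ t j, ‖g' t j‖ ≤ L)
    (hxstep : ∀ t, x (t + 1) = P (x t - η t • (((n : ℝ))⁻¹ • ∑ j, g t j)))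
    (hystep : ∀ t, y (t + 1) = P (y t - η t • (((n : ℝ))⁻¹ • ∑ j, g' t j))) :
    ‖x T - y T‖ ≤ min (2 * R)
      (4 * L * (Real.sqrt (∑ t ∈ Finset.Icc 1 (T - 1), η t ^ 2)
        + (1 / n) * ∑ t ∈ Finset.Icc 1 (T - 1), η t)) := by
  have hn' : (0:ℝ) < n := by exact_mod_cast hn
  have hνn : (0:ℝ) ≤ ((n:ℝ))⁻¹ := inv_nonneg.mpr hn'.le
  have hxmem : ∀ t, 1 ≤ t → x t ∈ X := by
    intro t ht
    rcases Nat.exists_eq_add_of_le ht with ⟨s, rfl⟩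
    cases s with
    | zero => exact hx1X
    | succ s => rw [show 1 + (s+1) = (s+1) + 1 by ring, hxstep]; exact hPmem _
  have hymem : ∀ t, 1 ≤ t → y t ∈ X := by
    intro t ht
    rcases Nat.exists_eq_add_of_le ht with ⟨s, rfl⟩
    cases s with
    | zero => rw [← hx1]; exact hx1X
    | succ s => rw [show 1 + (s+1) = (s+1) + 1 by ring, hystep]; exact hPmem _
  have hnonexp := my_proj_nonexp hXconvex P hPmem hPproj
  -- the one-step recurrence
  have step : ∀ t, 1 ≤ t → ‖x (t+1) - y (t+1)‖^2
      ≤ (‖x t - y t‖ + 2*L*η t*((n:ℝ))⁻¹)^2 + 4*L^2*(η t)^2 := by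
    intro t ht
    have hxX := hxmem t ht
    have hyX := hymem t ht
    have e : (x t - η t • (((n:ℝ))⁻¹ • ∑ j, g t j)) - (y t - η t • (((n:ℝ))⁻¹ • ∑ j, g' t j))
        = (x t - y t) - η t • (((n:ℝ))⁻¹ • ∑ j, (g t j - g' t j)) := by
      rw [Finset.sum_sub_distrib, smul_sub, smul_sub]
      abel
    have h1 : ‖x (t+1) - y (t+1)‖ ≤ ‖(x t - y t) - η t • (((n:ℝ))⁻¹ • ∑ j, (g t j - g' t j))‖ := by
      rw [hxstep t, hystep t, ← e]
      exact hnonexp _ _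
    set z : EuclideanSpace ℝ (Fin d) := x t - y t with hz
    set w : EuclideanSpace ℝ (Fin d) := ((n:ℝ))⁻¹ • ∑ j, (g t j - g' t j) with hw
    have expand : ‖z - η t • w‖^2 = ‖z‖^2 - 2 * (η t) * inner ℝ z w + (η t)^2 * ‖w‖^2 := by
      rw [norm_sub_sq_real, real_inner_smul_right, norm_smul, Real.norm_eq_abs,
        abs_of_nonneg (hη t)]
      ring
    have hinner_j : ∀ j : Fin n, j ≠ i → (0:ℝ) ≤ inner ℝ (g t j - g' t j) z := by
      intro j hj
      have A := hg t j (y t) hyX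
      have B := hg' t j (x t) hxX
      rw [← hdiff j hj] at B
      have eA : (inner ℝ (g t j) (y t - x t) : ℝ) = - inner ℝ (g t j) z := by
        rw [show y t - x t = -z by rw [hz]; abel, inner_neg_right]
      have eB : (inner ℝ (g' t j) (x t - y t) : ℝ) = inner ℝ (g' t j) z := by rw [hz]
      rw [eA] at A
      rw [eB] at B
      rw [inner_sub_left]
      linarith
    have hgg' : ∀ j : Fin n, ‖g t j - g' t j‖ ≤ 2*L := by
      intro j
      calc ‖g t j - g' t j‖ ≤ ‖g t j‖ + ‖g' t j‖ := norm_sub_le _ _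
        _ ≤ 2*L := by linarith [hgL t j, hg'L t j]
    have hinner_i : (-(2*L*‖z‖) : ℝ) ≤ inner ℝ (g t i - g' t i) z := by
      have habs := abs_real_inner_le_norm (g t i - g' t i) z
      have h2 : ‖g t i - g' t i‖ * ‖z‖ ≤ 2*L*‖z‖ :=
        mul_le_mul_of_nonneg_right (hgg' i) (norm_nonneg z)
      have := neg_abs_le (inner ℝ (g t i - g' t i) z : ℝ)
      linarith
    have hsum_ge : -(2*L*‖z‖) ≤ ∑ j, (inner ℝ (g t j - g' t j) z : ℝ) := by
      have hsplit := Finset.sum_erase_add Finset.univ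
        (fun j => (inner ℝ (g t j - g' t j) z : ℝ)) (Finset.mem_univ i)
      have hpos : 0 ≤ ∑ j ∈ Finset.univ.erase i, (inner ℝ (g t j - g' t j) z : ℝ) :=
        Finset.sum_nonneg fun j hj => hinner_j j (Finset.ne_of_mem_erase hj)
      linarith
    have hinner : (-(2*L*‖z‖))*((n:ℝ))⁻¹ ≤ (inner ℝ z w : ℝ) := by
      rw [real_inner_comm, hw, real_inner_smul_left, sum_inner,
        mul_comm (-(2*L*‖z‖)) (((n:ℝ))⁻¹)]
      exact mul_le_mul_of_nonneg_left hsum_ge hνn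
    have hwnorm : ‖w‖ ≤ 2*L := by
      rw [hw, norm_smul, Real.norm_eq_abs, abs_of_nonneg hνn]
      have hsn : ‖∑ j, (g t j - g' t j)‖ ≤ (n:ℝ) * (2*L) := by
        refine le_trans (norm_sum_le _ _) ?_
        calc (∑ j, ‖g t j - g' t j‖) ≤ ∑ _j : Fin n, (2*L) :=
              Finset.sum_le_sum fun j _ => hgg' j
          _ = (n:ℝ) * (2*L) := by
              rw [Finset.sum_const, Finset.card_univ, Fintype.card_fin, nsmul_eq_mul]
      calc ((n:ℝ))⁻¹ * ‖∑ j, (g t j - g' t j)‖ ≤ ((n:ℝ))⁻¹ * ((n:ℝ) * (2*L)) :=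
            mul_le_mul_of_nonneg_left hsn hνn
        _ = 2*L := by field_simp
    have hw2 : ‖w‖^2 ≤ 4*L^2 := by nlinarith [norm_nonneg w]
    have hfin : ‖x (t+1) - y (t+1)‖^2 ≤ ‖z - η t • w‖^2 :=
      pow_le_pow_left₀ (norm_nonneg _) h1 2
    have A1 := mul_le_mul_of_nonneg_left hinner (by linarith [hη t] : (0:ℝ) ≤ 2 * η t)
    have A2 := mul_le_mul_of_nonneg_left hw2 (by positivity : (0:ℝ) ≤ (η t)^2)
    rw [expand] at hfin
    have hzn : (0:ℝ) ≤ ‖z‖ := norm_nonneg z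
    have step2 : ‖z‖^2 - 2 * (η t) * inner ℝ z w + (η t)^2 * ‖w‖^2
        ≤ (‖z‖ + 2*L*η t*((n:ℝ))⁻¹)^2 + 4*L^2*(η t)^2 := by
      nlinarith [A1, A2, sq_nonneg (2*L*η t*((n:ℝ))⁻¹)]
    linarith
  -- the inductive bound
  have main : ∀ t, 1 ≤ t → ‖x t - y t‖
      ≤ (∑ s ∈ Finset.Icc 1 (t-1), 2*L*η s*((n:ℝ))⁻¹)
        + Real.sqrt (∑ s ∈ Finset.Icc 1 (t-1), 4*L^2*(η s)^2) := by
    intro t ht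
    induction t, ht using Nat.le_induction with
    | base =>
        rw [hx1, sub_self, norm_zero, show (1:ℕ)-1 = 0 from rfl,
          Finset.Icc_eq_empty (by omega), Finset.sum_empty, Finset.sum_empty, Real.sqrt_zero]
        norm_num
    | succ t ht ih =>
        have ht' : t - 1 + 1 = t := Nat.succ_pred_eq_of_pos ht
        have hsum1 : ∑ s ∈ Finset.Icc 1 t, 2*L*η s*((n:ℝ))⁻¹
            = (∑ s ∈ Finset.Icc 1 (t-1), 2*L*η s*((n:ℝ))⁻¹) + 2*L*η t*((n:ℝ))⁻¹ := by
          conv_lhs => rw [← ht']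
          rw [Finset.sum_Icc_succ_top (by omega), ht']
        have hsum2 : ∑ s ∈ Finset.Icc 1 t, 4*L^2*(η s)^2
            = (∑ s ∈ Finset.Icc 1 (t-1), 4*L^2*(η s)^2) + 4*L^2*(η t)^2 := by
          conv_lhs => rw [← ht']
          rw [Finset.sum_Icc_succ_top (by omega), ht']
        simp only [Nat.add_sub_cancel]
        rw [hsum1, hsum2]
        have hB : 0 ≤ ∑ s ∈ Finset.Icc 1 (t-1), 2*L*η s*((n:ℝ))⁻¹ :=
          Finset.sum_nonneg fun s _ =>
            mul_nonneg (mul_nonneg (by linarith [hη s]) (hη s)) hνn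
        have hG : 0 ≤ ∑ s ∈ Finset.Icc 1 (t-1), 4*L^2*(η s)^2 :=
          Finset.sum_nonneg fun s _ => by positivity
        have hβ : 0 ≤ 2*L*η t*((n:ℝ))⁻¹ :=
          mul_nonneg (mul_nonneg (by linarith [hη t]) (hη t)) hνn
        apply my_sqrt_step _ _ _ (by linarith) hG (by positivity) _ (norm_nonneg _)
        have hst := step t ht
        have hδ : ‖x t - y t‖ + 2*L*η t*((n:ℝ))⁻¹
            ≤ (∑ s ∈ Finset.Icc 1 (t-1), 2*L*η s*((n:ℝ))⁻¹) + 2*L*η t*((n:ℝ))⁻¹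
              + Real.sqrt (∑ s ∈ Finset.Icc 1 (t-1), 4*L^2*(η s)^2) := by
          linarith [ih]
        have hsq := pow_le_pow_left₀
          (by linarith [norm_nonneg (x t - y t)] : (0:ℝ) ≤ ‖x t - y t‖ + 2*L*η t*((n:ℝ))⁻¹) hδ 2
        calc ‖x (t+1) - y (t+1)‖^2
            ≤ (‖x t - y t‖ + 2*L*η t*((n:ℝ))⁻¹)^2 + 4*L^2*(η t)^2 := hst
          _ ≤ _ := by linarith [hsq]
  apply le_min
  · have hxT := hXR (hxmem T hT)
    have hyT := hXR (hymem T hT)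
    rw [Metric.mem_closedBall, dist_zero_right] at hxT hyT
    calc ‖x T - y T‖ ≤ ‖x T‖ + ‖y T‖ := norm_sub_le _ _
      _ ≤ 2*R := by linarith
  · have hm := main T hT
    have e1 : (∑ s ∈ Finset.Icc 1 (T-1), 2*L*η s*((n:ℝ))⁻¹)
        = 2*L*(∑ s ∈ Finset.Icc 1 (T-1), η s)*((n:ℝ))⁻¹ := by
      rw [← Finset.sum_mul, ← Finset.mul_sum]
    have e2 : (∑ s ∈ Finset.Icc 1 (T-1), 4*L^2*(η s)^2)
        = (2*L)^2 * ∑ s ∈ Finset.Icc 1 (T-1), (η s)^2 := by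
      rw [Finset.mul_sum]; exact Finset.sum_congr rfl fun s _ => by ring
    rw [e1, e2, Real.sqrt_mul (by positivity) _, Real.sqrt_sq (by linarith)] at hm
    have hS : 0 ≤ ∑ s ∈ Finset.Icc 1 (T-1), η s := Finset.sum_nonneg fun s _ => hη s
    have hQ : 0 ≤ Real.sqrt (∑ s ∈ Finset.Icc 1 (T-1), η s ^ 2) := Real.sqrt_nonneg _
    have p1 : 0 ≤ L * Real.sqrt (∑ s ∈ Finset.Icc 1 (T-1), η s ^ 2) := mul_nonneg hL hQ
    have p2 : 0 ≤ L * (∑ s ∈ Finset.Icc 1 (T-1), η s) * ((n:ℝ))⁻¹ :=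
      mul_nonneg (mul_nonneg hL hS) hνn
    have egoal : 4 * L * (Real.sqrt (∑ s ∈ Finset.Icc 1 (T-1), η s ^ 2)
        + (1/(n:ℝ)) * ∑ s ∈ Finset.Icc 1 (T-1), η s)
        = 4*L*Real.sqrt (∑ s ∈ Finset.Icc 1 (T-1), η s ^ 2)
          + 4*L*(∑ s ∈ Finset.Icc 1 (T-1), η s)*((n:ℝ))⁻¹ := by
      field_simp
    rw [egoal]
    linarith [hm, p1, p2]
end

section
/- Consider the deterministic full-batch GD lower bound construction in ℝ^d: losses f(x,0) = max{0, x_1 − ν, …, x_D − ν} and f(x,1) = ⟨r, x⟩/K with r = −(e_1 + ⋯ + e_D). With datasets S = (1,0,…,0) and S' = (0,…,0), starting from x^1 = y^1 = 0, if ν < η/(nK) and the adversarial subgradient oracle returns e_t at the t-th active coordinate, then for every t ∈ [D+1], the GD iterates satisfy x^{t+1} = −t(η/(nK)) r − η((n−1)/n) Σ_{s=1}^{t−1} e_s, while y^t = 0 for all t. -/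
/-- The deterministic full-batch GD lower bound construction: closed form of the iterates,
validity of the adversarial subgradient choices, and `y^t = 0`. -/
theorem stmt13 {d n D : ℕ} (hn : 0 < n) (hD : 0 < D) (hDd : D ≤ d)
    (η ν K : ℝ) (hη : 0 < η) (hK : 0 < K) (hν : 0 < ν)
    (hνs : ν < η / (n * K))
    (e : ℕ → EuclideanSpace ℝ (Fin d))
    (he : ∀ s (h1 : 1 ≤ s) (h2 : s ≤ D),
      e s = EuclideanSpace.single (⟨s - 1, by omega⟩ : Fin d) (1 : ℝ))
    (r : EuclideanSpace ℝ (Fin d)) (hr : r = -∑ s ∈ Finset.Icc 1 D, e s)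
    (f0 : EuclideanSpace ℝ (Fin d) → ℝ)
    (hf0 : ∀ u, f0 u = max 0 ((Finset.Icc 1 D).sup'
      (Finset.nonempty_Icc.mpr hD) (fun s => (inner ℝ (e s) u : ℝ) - ν)))
    (g : ℕ → EuclideanSpace ℝ (Fin d))
    (hg1 : g 1 = 0) (hgt : ∀ t, 2 ≤ t → t ≤ D + 1 → g t = e (t - 1))
    (x : ℕ → EuclideanSpace ℝ (Fin d)) (hx1 : x 1 = 0)
    (hxstep : ∀ t, 1 ≤ t → t ≤ D + 1 →
      x (t + 1) = x t - η • (((1 : ℝ) / (n * K)) • r + (((n : ℝ) - 1) / n) • g t))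
    (y : ℕ → EuclideanSpace ℝ (Fin d)) (hy1 : y 1 = 0)
    (hystep : ∀ t, y (t + 1) = y t - η • (0 : EuclideanSpace ℝ (Fin d))) :
    (∀ t, 1 ≤ t → t ≤ D + 1 →
      x (t + 1) = -((t : ℝ) * (η / (n * K))) • r
        - (η * (((n : ℝ) - 1) / n)) • ∑ s ∈ Finset.Icc 1 (t - 1), e s)
    ∧ (∀ t, 1 ≤ t → t ≤ D + 1 →
        ∀ w, f0 (x t) + (inner ℝ (g t) (w - x t) : ℝ) ≤ f0 w)
    ∧ (∀ w, f0 0 ≤ f0 w)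
    ∧ (∀ t, 1 ≤ t → y t = 0) := by
  have hnK : (0:ℝ) < (n:ℝ) * K := by positivity
  have hn1 : (1:ℝ) ≤ (n:ℝ) := by exact_mod_cast hn
  have hcoef : (0:ℝ) ≤ η * (((n:ℝ) - 1) / n) := by
    apply mul_nonneg hη.le
    apply div_nonneg (by linarith) (by linarith)
  -- orthonormality
  have hdelta : ∀ s s', 1 ≤ s → s ≤ D → 1 ≤ s' → s' ≤ D →
      (inner ℝ (e s) (e s') : ℝ) = if s = s' then 1 else 0 := by
    intro s s' h1 h2 h1' h2'
    rw [he s h1 h2, he s' h1' h2', EuclideanSpace.inner_single_left]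
    simp only [map_one, one_mul, EuclideanSpace.single_apply]
    by_cases h : s = s'
    · simp [h]
    · rw [if_neg h, if_neg]
      intro hc
      simp only [Fin.mk.injEq] at hc
      omega
  have hsum : ∀ s m, 1 ≤ s → s ≤ D → m ≤ D →
      (inner ℝ (e s) (∑ s' ∈ Finset.Icc 1 m, e s') : ℝ) = if s ≤ m then 1 else 0 := by
    intro s m h1 h2 hm
    rw [inner_sum]
    rw [Finset.sum_congr rfl (fun s' hs' => hdelta s s' h1 h2
      (Finset.mem_Icc.mp hs').1 (le_trans (Finset.mem_Icc.mp hs').2 hm))]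
    rw [Finset.sum_ite_eq]
    simp [Finset.mem_Icc, h1]
  have hrinner : ∀ s, 1 ≤ s → s ≤ D → (inner ℝ (e s) r : ℝ) = -1 := by
    intro s h1 h2
    rw [hr, inner_neg_right, hsum s D h1 h2 le_rfl, if_pos h2]
  -- Part 1: closed form
  have part1 : ∀ t, 1 ≤ t → t ≤ D + 1 →
      x (t + 1) = -((t : ℝ) * (η / (n * K))) • r
        - (η * (((n : ℝ) - 1) / n)) • ∑ s ∈ Finset.Icc 1 (t - 1), e s := by
    intro t ht1 ht2
    induction t with
    | zero => omega
    | succ m ih =>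
      rcases Nat.eq_or_lt_of_le ht1 with h1 | h1
      · -- m + 1 = 1, i.e. m = 0
        have hm : m = 0 := by omega
        subst hm
        rw [hxstep 1 le_rfl (by omega), hx1, hg1]
        have hempty : Finset.Icc 1 (0 + 1 - 1) = (∅ : Finset ℕ) := by simp
        rw [hempty]
        simp only [Finset.sum_empty, smul_zero, add_zero, sub_zero]
        push_cast
        module
      · -- m ≥ 1
        have hm1 : 1 ≤ m := by omega
        have hm2 : m ≤ D + 1 := by omega
        have ihm := ih hm1 hm2
        rw [hxstep (m + 1) (by omega) ht2, ihm, hgt (m + 1) (by omega) ht2]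
        have hms : m + 1 - 1 = m := by omega
        rw [hms]
        have hsplit : ∑ s ∈ Finset.Icc 1 m, e s
            = (∑ s ∈ Finset.Icc 1 (m - 1), e s) + e m := by
          have : m = (m - 1) + 1 := by omega
          rw [this, Finset.sum_Icc_succ_top (by omega)]
          rw [← this]
        rw [hsplit]
        have hc1 : ((m:ℝ) + 1) * (η / (n * K)) = (m:ℝ) * (η / (n * K)) + η * (1 / (n * K)) := by
          ring
        push_cast
        rw [hc1]
        module
  refine ⟨part1, ?_, ?_, ?_⟩
  -- Part 3 first (used in part 2)
  · -- Part 2: subgradient inequality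
    have part3 : ∀ w, f0 0 ≤ f0 w := by
      intro w
      rw [hf0, hf0]
      have h0 : ((Finset.Icc 1 D).sup' (Finset.nonempty_Icc.mpr hD)
          (fun s => (inner ℝ (e s) (0:EuclideanSpace ℝ (Fin d)) : ℝ) - ν)) = -ν := by
        apply le_antisymm
        · apply Finset.sup'_le
          intro s hs
          simp
        · obtain ⟨s, hs⟩ := Finset.nonempty_Icc.mpr hD
          refine le_trans ?_ (Finset.le_sup' _ hs)
          simp
      rw [h0, max_eq_left (by linarith)]
      exact le_max_left _ _
    intro t ht1 ht2 w
    rcases Nat.eq_or_lt_of_le ht1 with h1 | h1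
    · subst h1
      rw [hx1, hg1]
      simpa using part3 w
    · -- t ≥ 2
      obtain ⟨m, rfl⟩ : ∃ m, t = m + 1 := ⟨t - 1, by omega⟩
      have hm1 : 1 ≤ m := by omega
      have hmD : m ≤ D := by omega
      have hxm := part1 m hm1 (by omega)
      have hgm : g (m + 1) = e m := by
        have := hgt (m + 1) (by omega) ht2
        simpa using this
      -- coordinates of x (m+1)
      have hcoord : ∀ s, 1 ≤ s → s ≤ D →
          (inner ℝ (e s) (x (m + 1)) : ℝ)
            = (m:ℝ) * (η / (n * K)) - (if s ≤ m - 1 then η * (((n:ℝ) - 1) / n) else 0) := by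
        intro s h1 h2
        rw [hxm, inner_sub_right, real_inner_smul_right, real_inner_smul_right,
          hrinner s h1 h2, hsum s (m - 1) h1 h2 (by omega)]
        by_cases h : s ≤ m - 1 <;> simp [h] <;> ring
      have hAm : (inner ℝ (e m) (x (m + 1)) : ℝ) = (m:ℝ) * (η / (n * K)) := by
        rw [hcoord m hm1 hmD, if_neg (by omega)]
        ring
      have hbound : ∀ s, 1 ≤ s → s ≤ D →
          (inner ℝ (e s) (x (m + 1)) : ℝ) ≤ (m:ℝ) * (η / (n * K)) := by
        intro s h1 h2
        rw [hcoord s h1 h2]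
        by_cases h : s ≤ m - 1 <;> simp [h] <;> linarith
      have hνm : ν < (m:ℝ) * (η / (n * K)) := by
        have hm1' : (1:ℝ) ≤ (m:ℝ) := by exact_mod_cast hm1
        have hpos : (0:ℝ) < η / (n * K) := by positivity
        nlinarith
      -- f0 (x (m+1)) ≤ ⟨e m, x (m+1)⟩ - ν
      have hf0x : f0 (x (m + 1)) ≤ (inner ℝ (e m) (x (m + 1)) : ℝ) - ν := by
        rw [hf0, hAm]
        apply max_le (by linarith)
        apply Finset.sup'_le
        intro s hs
        obtain ⟨hs1, hs2⟩ := Finset.mem_Icc.mp hs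
        have := hbound s hs1 hs2
        linarith
      have hfw : (inner ℝ (e m) w : ℝ) - ν ≤ f0 w := by
        rw [hf0]
        refine le_trans (Finset.le_sup' (fun s => (inner ℝ (e s) w : ℝ) - ν)
          (Finset.mem_Icc.mpr ⟨hm1, hmD⟩)) (le_max_right _ _)
      rw [hgm, inner_sub_right]
      linarith
  · -- Part 3
    intro w
    rw [hf0, hf0]
    have h0 : ((Finset.Icc 1 D).sup' (Finset.nonempty_Icc.mpr hD)
        (fun s => (inner ℝ (e s) (0:EuclideanSpace ℝ (Fin d)) : ℝ) - ν)) = -ν := by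
      apply le_antisymm
      · apply Finset.sup'_le
        intro s hs
        simp
      · obtain ⟨s, hs⟩ := Finset.nonempty_Icc.mpr hD
        refine le_trans ?_ (Finset.le_sup' _ hs)
        simp
    rw [h0, max_eq_left (by linarith)]
    exact le_max_left _ _
  · -- Part 4
    intro t ht
    induction t with
    | zero => omega
    | succ m ih =>
      rcases Nat.eq_or_lt_of_le ht with h1 | h1
      · have hm0 : m = 0 := by omega
        subst hm0
        simpa using hy1
      · have := hystep m
        rw [this, ih (by omega)]
        simp
end

section
/- Let τ be a geometric-type random variable with P[τ = t] = (1/n)(1 − 1/n)^{t−1} for t ≥ 1 and let η > 0, T ≥ 1. Then (η/n) Σ_{t=1}^{T/2} √(T/2 − t} (1 − 1/n)^{t−1} is Ω(η T^{3/2}/n) when T ≤ n, and Ω(η √T) when T > n. -/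
lemma sqrt_aux {a b : ℕ} (h : a ≤ 9 * b) : Real.sqrt a ≤ 3 * Real.sqrt b := by
  have h1 : (a : ℝ) ≤ 9 * b := by exact_mod_cast h
  calc Real.sqrt a ≤ Real.sqrt (9 * b) := Real.sqrt_le_sqrt h1
    _ = Real.sqrt 9 * Real.sqrt b := Real.sqrt_mul (by norm_num) _
    _ = 3 * Real.sqrt b := by
        rw [show (9:ℝ) = 3 ^ 2 by norm_num, Real.sqrt_sq (by norm_num : (0:ℝ) ≤ 3)]

lemma key_aux (n M K : ℕ) (hn : 1 ≤ n) (hK1 : 1 ≤ K) (hKM : K ≤ M)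
    (h4K : 4 * (K - 1) ≤ n) :
    (3/4 : ℝ) * K * Real.sqrt ((M - K : ℕ) : ℝ) ≤
      ∑ t ∈ Finset.Icc 1 M,
        Real.sqrt ((M - t : ℕ) : ℝ) * (1 - 1 / (n : ℝ)) ^ (t - 1) := by
  have hn0 : (0:ℝ) < n := by exact_mod_cast hn
  have h1 : ∀ t ∈ Finset.Icc 1 K,
      (3/4 : ℝ) * Real.sqrt ((M - K : ℕ) : ℝ) ≤
        Real.sqrt ((M - t : ℕ) : ℝ) * (1 - 1 / (n : ℝ)) ^ (t - 1) := by
    intro t ht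
    simp only [Finset.mem_Icc] at ht
    have hb : (3/4 : ℝ) ≤ (1 - 1 / (n : ℝ)) ^ (t - 1) := by
      have hx : (-2 : ℝ) ≤ -(1 / (n : ℝ)) := by
        have : (1:ℝ) / n ≤ 1 := by
          rw [div_le_one hn0]; exact_mod_cast hn
        linarith
      have hber := one_add_mul_le_pow hx (t - 1)
      have htn : ((t - 1 : ℕ) : ℝ) * 4 ≤ (n : ℝ) := by
        have h2 : (t - 1) * 4 ≤ n := by omega
        exact_mod_cast h2
      have h3 : (3/4 : ℝ) ≤ 1 + (t - 1 : ℕ) * (-(1 / (n : ℝ))) := by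
        have h4 : ((t - 1 : ℕ) : ℝ) * (1 / (n : ℝ)) ≤ 1/4 := by
          rw [mul_one_div, div_le_div_iff₀ hn0 (by norm_num)]
          linarith
        have := h4
        nlinarith
      calc (3/4 : ℝ) ≤ 1 + (t - 1 : ℕ) * (-(1 / (n : ℝ))) := h3
        _ ≤ (1 + -(1 / (n : ℝ))) ^ (t - 1) := hber
        _ = (1 - 1 / (n : ℝ)) ^ (t - 1) := by ring_nf
    have hs : Real.sqrt ((M - K : ℕ) : ℝ) ≤ Real.sqrt ((M - t : ℕ) : ℝ) := by
      apply Real.sqrt_le_sqrt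
      exact_mod_cast Nat.sub_le_sub_left ht.2 M
    calc (3/4 : ℝ) * Real.sqrt ((M - K : ℕ) : ℝ)
        ≤ (3/4 : ℝ) * Real.sqrt ((M - t : ℕ) : ℝ) := by
          exact mul_le_mul_of_nonneg_left hs (by norm_num)
      _ ≤ Real.sqrt ((M - t : ℕ) : ℝ) * (1 - 1 / (n : ℝ)) ^ (t - 1) := by
          nlinarith [Real.sqrt_nonneg ((M - t : ℕ) : ℝ)]
  calc (3/4 : ℝ) * K * Real.sqrt ((M - K : ℕ) : ℝ)
      = ∑ _t ∈ Finset.Icc 1 K, (3/4 : ℝ) * Real.sqrt ((M - K : ℕ) : ℝ) := by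
        rw [Finset.sum_const, Nat.card_Icc, Nat.add_sub_cancel, nsmul_eq_mul]
        ring
    _ ≤ ∑ t ∈ Finset.Icc 1 K,
          Real.sqrt ((M - t : ℕ) : ℝ) * (1 - 1 / (n : ℝ)) ^ (t - 1) :=
        Finset.sum_le_sum h1
    _ ≤ ∑ t ∈ Finset.Icc 1 M,
          Real.sqrt ((M - t : ℕ) : ℝ) * (1 - 1 / (n : ℝ)) ^ (t - 1) := by
        apply Finset.sum_le_sum_of_subset_of_nonneg
        · exact Finset.Icc_subset_Icc_right hKM
        · intro t _ _
          apply mul_nonneg (Real.sqrt_nonneg _)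
          apply pow_nonneg
          have : (1:ℝ) / n ≤ 1 := by rw [div_le_one hn0]; exact_mod_cast hn
          linarith

/-- The core estimate in the lower bound for sampling-with-replacement SGD:
`(η/n) Σ_{t=1}^{T/2} √(T/2 − t) (1 − 1/n)^{t−1}` is `Ω(η T^{3/2}/n)` when `T ≤ n`
and `Ω(η √T)` when `T > n`. -/
theorem stmt15 : ∃ c : ℝ, 0 < c ∧ ∃ T0 : ℕ, ∀ (n T : ℕ) (η : ℝ),
    0 < η → 1 ≤ n → T0 ≤ T →
    ((T ≤ n →
      c * η * (T : ℝ) * Real.sqrt T / n ≤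
        (η / n) * ∑ t ∈ Finset.Icc 1 (T / 2),
          Real.sqrt ((T / 2 - t : ℕ) : ℝ) * (1 - 1 / (n : ℝ)) ^ (t - 1))
     ∧ (n < T →
      c * η * Real.sqrt T ≤
        (η / n) * ∑ t ∈ Finset.Icc 1 (T / 2),
          Real.sqrt ((T / 2 - t : ℕ) : ℝ) * (1 - 1 / (n : ℝ)) ^ (t - 1))) := by
  refine ⟨1/128, by norm_num, 16, ?_⟩
  intro n T η hη hn hT
  have hn0 : (0:ℝ) < n := by exact_mod_cast hn
  have hηn : (0:ℝ) < η / n := by positivity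
  constructor
  · -- case T ≤ n
    intro hTn
    have hkey := key_aux n (T / 2) (T / 4) hn (by omega) (by omega) (by omega)
    have h8K : (T : ℝ) ≤ 8 * ((T / 4 : ℕ) : ℝ) := by
      exact_mod_cast (by omega : T ≤ 8 * (T / 4))
    have hs := sqrt_aux (show T ≤ 9 * (T / 2 - T / 4) by omega)
    have hST : (1/128 : ℝ) * T * Real.sqrt T ≤
        (3/4 : ℝ) * ((T / 4 : ℕ) : ℝ) * Real.sqrt ((T / 2 - T / 4 : ℕ) : ℝ) := by
      nlinarith [Real.sqrt_nonneg ((T:ℕ):ℝ), Real.sqrt_nonneg ((T / 2 - T / 4 : ℕ) : ℝ),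
        (by positivity : (0:ℝ) ≤ ((T / 4 : ℕ) : ℝ))]
    have h1 : (1/128 : ℝ) * η * T * Real.sqrt T / n =
        (η / n) * ((1/128 : ℝ) * T * Real.sqrt T) := by ring
    rw [h1]
    exact mul_le_mul_of_nonneg_left (le_trans hST hkey) (le_of_lt hηn)
  · -- case n < T
    intro hnT
    rcases le_or_gt n 7 with hn7 | hn8
    · have hkey := key_aux n (T / 2) 1 hn (by omega) (by omega) (by omega)
      have hs := sqrt_aux (show T ≤ 9 * (T / 2 - 1) by omega)
      have hn7' : (n : ℝ) ≤ 7 := by exact_mod_cast hn7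
      have hST : (1/128 : ℝ) * n * Real.sqrt T ≤
          (3/4 : ℝ) * ((1 : ℕ) : ℝ) * Real.sqrt ((T / 2 - 1 : ℕ) : ℝ) := by
        push_cast
        nlinarith [Real.sqrt_nonneg ((T / 2 - 1 : ℕ) : ℝ), Real.sqrt_nonneg ((T:ℕ):ℝ)]
      have h1 : (1/128 : ℝ) * η * Real.sqrt T =
          (η / n) * ((1/128 : ℝ) * n * Real.sqrt T) := by
        field_simp
      rw [h1]
      exact mul_le_mul_of_nonneg_left (le_trans hST hkey) (le_of_lt hηn)
    · have hkey := key_aux n (T / 2) (n / 4) hn (by omega) (by omega) (by omega)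
      have h8K : (n : ℝ) ≤ 8 * ((n / 4 : ℕ) : ℝ) := by
        exact_mod_cast (by omega : n ≤ 8 * (n / 4))
      have hs := sqrt_aux (show T ≤ 9 * (T / 2 - n / 4) by omega)
      have hST : (1/128 : ℝ) * n * Real.sqrt T ≤
          (3/4 : ℝ) * ((n / 4 : ℕ) : ℝ) * Real.sqrt ((T / 2 - n / 4 : ℕ) : ℝ) := by
        nlinarith [Real.sqrt_nonneg ((T:ℕ):ℝ), Real.sqrt_nonneg ((T / 2 - n / 4 : ℕ) : ℝ),
          (by positivity : (0:ℝ) ≤ ((n / 4 : ℕ) : ℝ))]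
      have h1 : (1/128 : ℝ) * η * Real.sqrt T =
          (η / n) * ((1/128 : ℝ) * n * Real.sqrt T) := by
        field_simp
      rw [h1]
      exact mul_le_mul_of_nonneg_left (le_trans hST hkey) (le_of_lt hηn)
end

section
/- Fixed permutation (incremental) subgradient descent with constant step size η_k within epoch k, on an empirical objective F_S that is the average of n convex L-Lipschitz losses over a closed convex set X, satisfies for every y ∈ X: η_k [F_S(x^k) − F_S(y)] ≤ (1/(2n))(‖x^k − y‖² − ‖x^{k+1} − y‖²) + η_k² L²(n+2)/2, where x^k and x^{k+1} are the iterates at the start and end of epoch k. -/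
set_option maxHeartbeats 1000000


/-- One epoch of fixed-permutation (incremental) subgradient descent with constant step
size `η` within the epoch: for every `y ∈ X`,
`η(F_S(x^k) − F_S(y)) ≤ (1/(2n))(‖x^k − y‖² − ‖x^{k+1} − y‖²) + η²L²(n+2)/2`. -/
theorem stmt17 {d n : ℕ} (hn : 0 < n)
    (X : Set (EuclideanSpace ℝ (Fin d)))
    (hXclosed : IsClosed X) (hXconvex : Convex ℝ X)
    (P : EuclideanSpace ℝ (Fin d) → EuclideanSpace ℝ (Fin d))
    (hPmem : ∀ u, P u ∈ X)
    (hPproj : ∀ u, ∀ w ∈ X, ‖P u - u‖ ≤ ‖w - u‖)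
    (L η : ℝ) (hL : 0 ≤ L) (hη : 0 ≤ η)
    (fi : Fin n → EuclideanSpace ℝ (Fin d) → ℝ)
    (hconv : ∀ j, ConvexOn ℝ X (fi j))
    (hLip : ∀ j, ∀ u ∈ X, ∀ v ∈ X, |fi j u - fi j v| ≤ L * ‖u - v‖)
    (σ : Equiv.Perm (Fin n))
    (u : ℕ → EuclideanSpace ℝ (Fin d)) (hu1 : u 1 ∈ X)
    (g : ℕ → EuclideanSpace ℝ (Fin d))
    (hg : ∀ t (h1 : 1 ≤ t) (h2 : t ≤ n), ∀ w ∈ X,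
      fi (σ ⟨t - 1, by omega⟩) (u t) + (inner ℝ (g t) (w - u t) : ℝ)
        ≤ fi (σ ⟨t - 1, by omega⟩) w)
    (hgL : ∀ t, ‖g t‖ ≤ L)
    (hstep : ∀ t, 1 ≤ t → t ≤ n → u (t + 1) = P (u t - η • g t))
    (FS : EuclideanSpace ℝ (Fin d) → ℝ)
    (hFS : ∀ v, FS v = (1 / n : ℝ) * ∑ j, fi j v) :
    ∀ y ∈ X,
      η * (FS (u 1) - FS y)
        ≤ (1 / (2 * n) : ℝ) * (‖u 1 - y‖ ^ 2 - ‖u (n + 1) - y‖ ^ 2)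
          + η ^ 2 * L ^ 2 * ((n : ℝ) + 2) / 2 := by
  intro y hy
  have hn0 : (0:ℝ) < n := by exact_mod_cast hn
  -- variational inequality for the projection
  have hVI : ∀ v : EuclideanSpace ℝ (Fin d), ∀ w ∈ X,
      (inner ℝ (v - P v) (w - P v) : ℝ) ≤ 0 := by
    intro v w hw
    haveI : Nonempty X := ⟨⟨P v, hPmem v⟩⟩
    have hbdd : BddBelow (Set.range (fun z : X => ‖v - (z : EuclideanSpace ℝ (Fin d))‖)) := by
      refine ⟨0, ?_⟩
      rintro x ⟨z, rfl⟩
      exact norm_nonneg _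
    have hinf : ‖v - P v‖ = ⨅ w : X, ‖v - (w : EuclideanSpace ℝ (Fin d))‖ := by
      apply le_antisymm
      · apply le_ciInf
        intro z
        rw [norm_sub_rev, norm_sub_rev v (z : EuclideanSpace ℝ (Fin d))]
        exact hPproj v z z.2
      · exact ciInf_le hbdd ⟨P v, hPmem v⟩
    exact (norm_eq_iInf_iff_real_inner_le_zero hXconvex (hPmem v)).mp hinf w hw
  -- projection is nonexpansive towards points of X
  have hnonexp_sq : ∀ v, ∀ w ∈ X, ‖P v - w‖^2 ≤ ‖v - w‖^2 := by
    intro v w hw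
    have h1 := hVI v w hw
    have e : v - w = (v - P v) + (P v - w) := by abel
    have h3 := norm_add_sq_real (v - P v) (P v - w)
    have h2 : (inner ℝ (v - P v) (P v - w) : ℝ) = - (inner ℝ (v - P v) (w - P v) : ℝ) := by
      rw [← inner_neg_right]
      congr 1
      abel
    rw [e, h3]
    nlinarith [sq_nonneg ‖v - P v‖]
  have hnonexp : ∀ v, ∀ w ∈ X, ‖P v - w‖ ≤ ‖v - w‖ := by
    intro v w hw
    nlinarith [hnonexp_sq v w hw, norm_nonneg (P v - w), norm_nonneg (v - w)]
  -- iterates stay in X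
  have hmem : ∀ t, 1 ≤ t → t ≤ n + 1 → u t ∈ X := by
    intro t h1 h2
    rcases Nat.eq_or_lt_of_le h1 with h | h
    · rw [← h]; exact hu1
    · obtain ⟨s, rfl⟩ : ∃ s, t = s + 1 := ⟨t - 1, by omega⟩
      rw [hstep s (by omega) (by omega)]
      exact hPmem _
  -- each step moves by at most η L
  have hstepnorm : ∀ t, 1 ≤ t → t ≤ n → ‖u (t+1) - u t‖ ≤ η * L := by
    intro t h1 h2
    rw [hstep t h1 h2]
    have h3 : ‖P (u t - η • g t) - u t‖ ≤ ‖(u t - η • g t) - u t‖ :=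
      hnonexp _ _ (hmem t h1 (by omega))
    have h4 : (u t - η • g t) - u t = -(η • g t) := by abel
    rw [h4, norm_neg, norm_smul, Real.norm_eq_abs, abs_of_nonneg hη] at h3
    calc ‖P (u t - η • g t) - u t‖ ≤ η * ‖g t‖ := h3
      _ ≤ η * L := mul_le_mul_of_nonneg_left (hgL t) hη
  -- drift within the epoch
  have hdrift : ∀ s, s ≤ n → ‖u (s+1) - u 1‖ ≤ η * L * s := by
    intro s
    induction s with
    | zero => intro _; simp
    | succ k ih =>
      intro hk
      have h1 := ih (by omega)
      have h2 := hstepnorm (k+1) (by omega) hk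
      have h3 : ‖u (k+1+1) - u 1‖ ≤ ‖u (k+1+1) - u (k+1)‖ + ‖u (k+1) - u 1‖ :=
        norm_sub_le_norm_sub_add_norm_sub _ _ _
      push_cast
      nlinarith [mul_nonneg hη hL]
  -- key per-step inequality
  have hkey : ∀ i : Fin n,
      2*η*(fi (σ i) (u 1) - fi (σ i) y)
        ≤ (‖u (↑i+1) - y‖^2 - ‖u (↑i+2) - y‖^2) + η^2*L^2 + 2*η^2*L^2*(↑↑i : ℝ) := by
    intro i
    set t : ℕ := ↑i + 1 with ht
    have hti : 1 ≤ t := by omega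
    have htn : t ≤ n := by omega
    have hm : u t ∈ X := hmem t hti (by omega)
    -- projection step
    have hP : u (t+1) = P (u t - η • g t) := hstep t hti htn
    have h1 : ‖u (t+1) - y‖^2 ≤ ‖(u t - η • g t) - y‖^2 := by
      rw [hP]; exact hnonexp_sq _ y hy
    have hexp : ‖(u t - η • g t) - y‖^2
        = ‖u t - y‖^2 - 2*η*(inner ℝ (g t) (u t - y) : ℝ) + η^2*‖g t‖^2 := by
      have e : (u t - η • g t) - y = (u t - y) - η • g t := by abel
      rw [e, norm_sub_sq_real, real_inner_smul_right, real_inner_comm, norm_smul,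
        Real.norm_eq_abs, mul_pow, sq_abs]
      ring
    -- subgradient inequality at y
    have hsub := hg t hti htn y hy
    have hi : (⟨t - 1, by omega⟩ : Fin n) = i := by
      ext; simp [ht]
    rw [hi] at hsub
    have hflip : (inner ℝ (g t) (y - u t) : ℝ) = - (inner ℝ (g t) (u t - y) : ℝ) := by
      rw [← inner_neg_right]
      congr 1
      abel
    have hinner : fi (σ i) (u t) - fi (σ i) y ≤ (inner ℝ (g t) (u t - y) : ℝ) := by
      rw [hflip] at hsub; linarith
    -- gradient norm bound
    have hD : η^2*‖g t‖^2 ≤ η^2*L^2 := by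
      have hg2 : ‖g t‖^2 ≤ L^2 := by nlinarith [hgL t, norm_nonneg (g t)]
      exact mul_le_mul_of_nonneg_left hg2 (sq_nonneg η)
    -- Lipschitz + drift
    have hlip := hLip (σ i) (u 1) hu1 (u t) hm
    have hd : ‖u t - u 1‖ ≤ η * L * (↑↑i : ℝ) := hdrift ↑i (le_of_lt i.isLt)
    have hB : fi (σ i) (u 1) - fi (σ i) (u t) ≤ η * L^2 * (↑↑i : ℝ) := by
      have h5 : fi (σ i) (u 1) - fi (σ i) (u t) ≤ L * ‖u 1 - u t‖ := le_of_abs_le hlip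
      rw [norm_sub_rev] at h5
      nlinarith [norm_nonneg (u t - u 1)]
    have hA : 2*η*(fi (σ i) (u t) - fi (σ i) y) ≤ 2*η*(inner ℝ (g t) (u t - y) : ℝ) :=
      mul_le_mul_of_nonneg_left hinner (by positivity)
    have hC : 2*η*(fi (σ i) (u 1) - fi (σ i) (u t)) ≤ 2*η^2*L^2*(↑↑i : ℝ) := by
      nlinarith [hB]
    have h6 : ‖u (t+1) - y‖^2 ≤ ‖u t - y‖^2 - 2*η*(inner ℝ (g t) (u t - y) : ℝ) + η^2*L^2 := by
      rw [hexp] at h1; linarith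
    have e1 : (↑i : ℕ) + 2 = t + 1 := by omega
    rw [e1]
    linarith
  -- sum over the epoch
  have H : ∑ i : Fin n, (2*η*(fi (σ i) (u 1) - fi (σ i) y))
      ≤ ∑ i : Fin n, ((‖u (↑i+1) - y‖^2 - ‖u (↑i+2) - y‖^2) + η^2*L^2 + 2*η^2*L^2*(↑↑i : ℝ)) :=
    Finset.sum_le_sum (fun i _ => hkey i)
  -- telescoping sum
  have h2 : ∑ i : Fin n, (‖u (↑i+1) - y‖^2 - ‖u (↑i+2) - y‖^2)
      = ‖u 1 - y‖^2 - ‖u (n+1) - y‖^2 := by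
    rw [Fin.sum_univ_eq_sum_range (fun i => ‖u (i+1) - y‖^2 - ‖u (i+2) - y‖^2)]
    exact Finset.sum_range_sub' (fun i => ‖u (i+1) - y‖^2) n
  -- Gauss sum
  have h3 : ∑ i : Fin n, ((↑↑i : ℝ)) = (n:ℝ)*((n:ℝ)-1)/2 := by
    rw [Fin.sum_univ_eq_sum_range (fun i => (i:ℝ))]
    have hG := Finset.sum_range_id_mul_two n
    have hGc : ((∑ i ∈ Finset.range n, i : ℕ) : ℝ) * 2 = (n:ℝ) * ((n:ℝ) - 1) := by
      rw [← Nat.cast_ofNat, ← Nat.cast_mul, hG]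
      push_cast [Nat.cast_sub hn]
      ring
    rw [Nat.cast_sum] at hGc
    linarith
  have hR : ∑ i : Fin n, ((‖u (↑i+1) - y‖^2 - ‖u (↑i+2) - y‖^2) + η^2*L^2 + 2*η^2*L^2*(↑↑i : ℝ))
      = (‖u 1 - y‖^2 - ‖u (n+1) - y‖^2) + (n:ℝ)*(η^2*L^2) + η^2*L^2*(n:ℝ)*((n:ℝ)-1) := by
    rw [Finset.sum_add_distrib, Finset.sum_add_distrib, h2, Finset.sum_const, ← Finset.mul_sum, h3]
    simp [Finset.card_univ, nsmul_eq_mul]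
    ring
  -- permutation reindexing
  have hperm1 : ∑ i : Fin n, fi (σ i) (u 1) = ∑ j, fi j (u 1) :=
    Equiv.sum_comp σ (fun j => fi j (u 1))
  have hperm2 : ∑ i : Fin n, fi (σ i) y = ∑ j, fi j y :=
    Equiv.sum_comp σ (fun j => fi j y)
  have hL1 : ∑ i : Fin n, (2*η*(fi (σ i) (u 1) - fi (σ i) y))
      = 2*η*((∑ j, fi j (u 1)) - ∑ j, fi j y) := by
    rw [← Finset.mul_sum, Finset.sum_sub_distrib, hperm1, hperm2]
  have hFS1 : (n:ℝ) * FS (u 1) = ∑ j, fi j (u 1) := by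
    rw [hFS]; field_simp
  have hFS2 : (n:ℝ) * FS y = ∑ j, fi j y := by
    rw [hFS]; field_simp
  rw [hL1, hR] at H
  -- final arithmetic
  have key : 2*(n:ℝ)*(η*(FS (u 1) - FS y))
      ≤ (‖u 1 - y‖^2 - ‖u (n+1) - y‖^2) + η^2*L^2*(n:ℝ)*((n:ℝ)+2) := by
    nlinarith [hn0, sq_nonneg (η*L)]
  have e2 : (1/(2*(n:ℝ)))*(‖u 1 - y‖^2 - ‖u (n+1) - y‖^2) + η^2*L^2*((n:ℝ)+2)/2
      = ((‖u 1 - y‖^2 - ‖u (n+1) - y‖^2) + η^2*L^2*(n:ℝ)*((n:ℝ)+2)) / (2*(n:ℝ)) := by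
    field_simp
  rw [e2, le_div_iff₀ (by positivity)]
  linarith [key]
end
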